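/- Let t be a real number with |t| < 1. Then for every (x, y) ∈ ℝ² there exists a unique pair (x₀, y₀) ∈ ℝ² such that x₀ − t·sin y₀ = x and y₀ + t·cos x₀ = y. That is, the characteristic map (x₀, y₀) ↦ (x₀ − t·sin y₀, y₀ + t·cos x₀) is a bijection of ℝ² for |t| < 1. -/

import Mathlib

open Real

private lemma key (t : ℝ) (ht : |t| < 1) :
    ∀ x y : ℝ, ∃! p : ℝ × ℝ,
      p.1 - t * sin p.2 = x ∧ p.2 + t * cos p.1 = y := by
  intro x y
  set F : ℝ × ℝ → ℝ × ℝ := fun p => (x + t * sin p.2, y - t * cos p.1) with hF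
  have hsinL : LipschitzWith 1 Real.sin :=
    lipschitzWith_of_nnnorm_deriv_le Real.differentiable_sin (fun x => by
      rw [Real.deriv_sin]
      simpa [← NNReal.coe_le_coe, Real.norm_eq_abs] using Real.abs_cos_le_one x)
  have hcosL : LipschitzWith 1 Real.cos :=
    lipschitzWith_of_nnnorm_deriv_le Real.differentiable_cos (fun x => by
      rw [Real.deriv_cos]
      simpa [← NNReal.coe_le_coe, Real.norm_eq_abs] using Real.abs_sin_le_one x)
  have hL : LipschitzWith ‖t‖₊ F := by
    intro p q
    have hsin : edist (Real.sin p.2) (Real.sin q.2) ≤ edist p.2 q.2 := by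
      simpa using hsinL p.2 q.2
    have hcos : edist (Real.cos p.1) (Real.cos q.1) ≤ edist p.1 q.1 := by
      simpa using hcosL p.1 q.1
    rw [Prod.edist_eq]
    apply max_le
    · have : edist (x + t * sin p.2) (x + t * sin q.2)
          = edist (t * sin p.2) (t * sin q.2) := by
        simp only [edist_dist, dist_add_left]
      rw [this]
      calc edist (t * sin p.2) (t * sin q.2) = ‖t‖₊ * edist (sin p.2) (sin q.2) := by
            simp [edist_dist, Real.dist_eq, ← mul_sub, abs_mul, ENNReal.ofReal_mul (abs_nonneg t)]
            congr 1
            simp [← Real.enorm_eq_ofReal_abs, enorm_eq_nnnorm]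
        _ ≤ ‖t‖₊ * edist p.2 q.2 := by gcongr
        _ ≤ ‖t‖₊ * edist p q := by gcongr; rw [Prod.edist_eq]; exact le_max_right _ _
    · have : edist (y - t * cos p.1) (y - t * cos q.1)
          = edist (t * cos p.1) (t * cos q.1) := by
        simp only [edist_dist, dist_sub_left]
      rw [this]
      calc edist (t * cos p.1) (t * cos q.1) = ‖t‖₊ * edist (cos p.1) (cos q.1) := by
            simp [edist_dist, Real.dist_eq, ← mul_sub, abs_mul, ENNReal.ofReal_mul (abs_nonneg t)]
            congr 1
            simp [← Real.enorm_eq_ofReal_abs, enorm_eq_nnnorm]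
        _ ≤ ‖t‖₊ * edist p.1 q.1 := by gcongr
        _ ≤ ‖t‖₊ * edist p q := by gcongr; rw [Prod.edist_eq]; exact le_max_left _ _
  have hK : ‖t‖₊ < 1 := by
    rw [← NNReal.coe_lt_coe]
    simpa [Real.norm_eq_abs] using ht
  have hC : ContractingWith ‖t‖₊ F := ⟨hK, hL⟩
  have hfix : ∀ p : ℝ × ℝ, (p.1 - t * sin p.2 = x ∧ p.2 + t * cos p.1 = y)
      ↔ Function.IsFixedPt F p := by
    intro p
    constructor
    · rintro ⟨h1, h2⟩
      have : F p = (x + t * sin p.2, y - t * cos p.1) := rfl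
      rw [Function.IsFixedPt, this, Prod.ext_iff]
      constructor <;> simp <;> linarith
    · intro h
      rw [Function.IsFixedPt, Prod.ext_iff] at h
      simp only [hF] at h
      constructor <;> linarith [h.1, h.2]
  refine ⟨hC.fixedPoint F, ?_, ?_⟩
  · exact (hfix _).2 (hC.fixedPoint_isFixedPt)
  · intro p hp
    exact hC.fixedPoint_unique ((hfix p).1 hp)

/-- For `|t| < 1`, the characteristic map
`(x₀, y₀) ↦ (x₀ - t sin y₀, y₀ + t cos x₀)` of the two-dimensional problem
`φ_t + φ_x φ_y = 0` with initial data `sin x + cos y` is a bijection of `ℝ²`: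
for every `(x, y)` there is a unique `(x₀, y₀)` with `x₀ - t sin y₀ = x` and
`y₀ + t cos x₀ = y`. -/
theorem stmt_14 (t : ℝ) (ht : |t| < 1) :
    (∀ x y : ℝ, ∃! p : ℝ × ℝ,
      p.1 - t * sin p.2 = x ∧ p.2 + t * cos p.1 = y) ∧
    Function.Bijective
      (fun p : ℝ × ℝ => (p.1 - t * sin p.2, p.2 + t * cos p.1)) := by
  refine ⟨key t ht, ?_, ?_⟩
  · intro p q hpq
    simp only [Prod.mk.injEq] at hpq
    obtain ⟨r, -, hu⟩ := key t ht (p.1 - t * sin p.2) (p.2 + t * cos p.1)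
    have h1 := hu p ⟨rfl, rfl⟩
    have h2 := hu q ⟨hpq.1.symm, hpq.2.symm⟩
    rw [h1, h2]
  · intro ⟨x, y⟩
    obtain ⟨p, ⟨h1, h2⟩, -⟩ := key t ht x y
    exact ⟨p, by simp [h1, h2]⟩
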